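/- The condition H = V ⊕ W⊥ (V ∩ W⊥ = {0} and V + W⊥ = H) for closed subspaces V, W of a Hilbert space H holds if and only if H = W ⊕ V⊥. -/

import Mathlib

open ContinuousLinearMap Submodule
open scoped InnerProductSpace

private lemma isCompl_orthogonal_aux
    {H : Type*} [NormedAddCommGroup H] [InnerProductSpace ℂ H] [CompleteSpace H]
    (V W : Submodule ℂ H) [CompleteSpace V] [CompleteSpace W]
    (h : IsCompl V Wᗮ) : IsCompl W Vᗮ := by
  have hVc : IsClosed (V : Set H) := (completeSpace_coe_iff_isComplete.mp ‹_›).isClosed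
  have hWoc : IsClosed ((Wᗮ : Submodule ℂ H) : Set H) := Submodule.isClosed_orthogonal W
  set P : H →L[ℂ] H := V.subtypeL ∘L (V.linearProjOfClosedCompl Wᗮ h hVc hWoc) with hP
  have hPV : ∀ x ∈ V, P x = x := fun x hx => by
    have := Submodule.linearProjOfIsCompl_apply_left h ⟨x, hx⟩
    rw [hP, ContinuousLinearMap.comp_apply, Submodule.coe_continuous_linearProjOfClosedCompl']
    exact congrArg (Subtype.val) this
  have hPWo : ∀ x ∈ Wᗮ, P x = 0 := fun x hx => by
    have := Submodule.linearProjOfIsCompl_apply_right h ⟨x, hx⟩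
    rw [hP, ContinuousLinearMap.comp_apply, Submodule.coe_continuous_linearProjOfClosedCompl']
    exact congrArg (Subtype.val) this
  have hPmem : ∀ x, P x ∈ V := fun x => (V.linearProjOfClosedCompl Wᗮ h hVc hWoc x).2
  set Q : H →L[ℂ] H := ContinuousLinearMap.adjoint P with hQ
  -- Q is the identity on W
  have hQW : ∀ y ∈ W, Q y = y := by
    intro y hy
    refine ext_inner_right ℂ fun x => ?_
    rw [hQ, ContinuousLinearMap.adjoint_inner_left]
    have hx : x - P x ∈ Wᗮ := by
      obtain ⟨v, w, hv, hw, rfl⟩ := Submodule.codisjoint_iff_exists_add_eq.mp h.codisjoint x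
      have : P (v + w) = v := by rw [map_add, hPV v hv, hPWo w hw, add_zero]
      rw [this]; simpa using hw
    have h0 : ⟪y, x - P x⟫_ℂ = 0 := Submodule.inner_right_of_mem_orthogonal hy hx
    rw [inner_sub_right, sub_eq_zero] at h0
    exact h0.symm
  -- Q vanishes on Vᗮ
  have hQVo : ∀ y ∈ Vᗮ, Q y = 0 := by
    intro y hy
    refine ext_inner_right ℂ fun x => ?_
    rw [hQ, ContinuousLinearMap.adjoint_inner_left, inner_zero_left]
    exact Submodule.inner_left_of_mem_orthogonal (hPmem x) hy
  -- the range of Q is contained in W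
  have hQmem : ∀ x, Q x ∈ W := by
    intro x
    rw [← W.orthogonal_orthogonal, Submodule.mem_orthogonal']
    intro z hz
    rw [hQ, ContinuousLinearMap.adjoint_inner_left, hPWo z hz, inner_zero_right]
  -- x - Q x ∈ Vᗮ for all x
  have hker : ∀ x, x - Q x ∈ Vᗮ := by
    intro x
    rw [Submodule.mem_orthogonal']
    intro u hu
    rw [inner_sub_left, hQ, ContinuousLinearMap.adjoint_inner_left, hPV u hu, sub_self]
  constructor
  · rw [Submodule.disjoint_def]
    intro y hyW hyVo
    have := hQW y hyW
    rw [hQVo y hyVo] at this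
    exact this.symm
  · rw [codisjoint_iff_le_sup]
    intro x _
    have : x = Q x + (x - Q x) := by abel
    rw [this]
    exact Submodule.add_mem_sup (hQmem x) (hker x)

/-- For closed subspaces `V`, `W` of a Hilbert space `H`, the direct sum decomposition
`H = V ⊕ Wᗮ` (i.e. `V` and `Wᗮ` are complementary) holds if and only if `H = W ⊕ Vᗮ`. -/
theorem isCompl_orthogonal_symm
    {H : Type*} [NormedAddCommGroup H] [InnerProductSpace ℂ H] [CompleteSpace H]
    (V W : Submodule ℂ H) [CompleteSpace V] [CompleteSpace W] :
    IsCompl V Wᗮ ↔ IsCompl W Vᗮ :=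
  ⟨isCompl_orthogonal_aux V W, isCompl_orthogonal_aux W V⟩
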